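/- (Exponential generation in the diagonalizable case.) Let F be conjugate symplectic and diagonalizable, F = S D_F S⁻¹ with S invertible and D_F = diag(λ_1, …, λ_{2N}). Let D_G = diag(g_1, …, g_{2N}) be a diagonal matrix with exp(g_j) = λ_j for every j, and suppose that conj(g_i) + g_j = 0 whenever the entry (Sᴴ J S)_{ij} ≠ 0. Then G = S D_G S⁻¹ satisfies exp(G) = F and Gᴴ J + J G = 0. -/

import Mathlib

open Matrix

/-- The standard symplectic form matrix `J = [[0, I_N], [-I_N, 0]]`. -/
noncomputable def symplJ (N : ℕ) : Matrix (Fin N ⊕ Fin N) (Fin N ⊕ Fin N) ℂ :=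
  Matrix.fromBlocks 0 1 (-1) 0

/-- A `2N × 2N` complex matrix `F` is conjugate symplectic if `Fᴴ J F = J`. -/
def IsConjSymplectic {N : ℕ} (F : Matrix (Fin N ⊕ Fin N) (Fin N ⊕ Fin N) ℂ) : Prop :=
  Fᴴ * symplJ N * F = symplJ N

/-- Exponential generation in the diagonalizable case: a diagonalizable conjugate
symplectic matrix `F = S D_F S⁻¹` admits a logarithm `G = S D_G S⁻¹` in the
conjugate symplectic Lie algebra, provided the branch choices satisfy the
pairing condition `conj(g i) + g j = 0` whenever `(Sᴴ J S) i j ≠ 0`. -/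
theorem conjSymplectic_exponential_generation (N : ℕ) (hN : 1 ≤ N)
    (F S : Matrix (Fin N ⊕ Fin N) (Fin N ⊕ Fin N) ℂ)
    (lam g : (Fin N ⊕ Fin N) → ℂ)
    (hF : IsConjSymplectic F) (hS : IsUnit S)
    (hdiag : F = S * Matrix.diagonal lam * S⁻¹)
    (hexp : ∀ j, Complex.exp (g j) = lam j)
    (hpair : ∀ i j, (Sᴴ * symplJ N * S) i j ≠ 0 → (starRingEnd ℂ) (g i) + g j = 0) :
    NormedSpace.exp (S * Matrix.diagonal g * S⁻¹) = F ∧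
    (S * Matrix.diagonal g * S⁻¹)ᴴ * symplJ N
      + symplJ N * (S * Matrix.diagonal g * S⁻¹) = 0 := by
  have hdet : IsUnit S.det := (Matrix.isUnit_iff_isUnit_det S).mp hS
  have hdetH : IsUnit Sᴴ.det := by
    rw [Matrix.det_conjTranspose]; exact hdet.star
  constructor
  · rw [Matrix.exp_conj S (Matrix.diagonal g) hS, Matrix.exp_diagonal g, hdiag]
    have hl : NormedSpace.exp g = lam := funext fun j => by
      rw [Pi.coe_exp, ← Complex.exp_eq_exp_ℂ, hexp]
    rw [hl]
  · set M := Sᴴ * symplJ N * S with hM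
    have hzero : Matrix.diagonal (star g) * M + M * Matrix.diagonal g = 0 := by
      ext i j
      simp only [Matrix.add_apply, Matrix.diagonal_mul, Matrix.mul_diagonal,
        Matrix.zero_apply, Pi.star_apply]
      by_cases h : M i j = 0
      · simp [h]
      · have hp := hpair i j h
        rw [Complex.star_def]
        linear_combination (M i j) * hp
    have hJS : symplJ N * S = (S⁻¹)ᴴ * M := by
      rw [hM, Matrix.conjTranspose_nonsing_inv, ← Matrix.mul_assoc, ← Matrix.mul_assoc,
        Matrix.nonsing_inv_mul _ hdetH, Matrix.one_mul]
    have hSJ : Sᴴ * symplJ N = M * S⁻¹ := by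
      rw [hM, Matrix.mul_assoc, Matrix.mul_nonsing_inv _ hdet, Matrix.mul_one]
    have e1 : (S * Matrix.diagonal g * S⁻¹)ᴴ * symplJ N
        = S⁻¹ᴴ * (Matrix.diagonal (star g) * M) * S⁻¹ := by
      rw [Matrix.conjTranspose_mul, Matrix.conjTranspose_mul, Matrix.diagonal_conjTranspose,
        Matrix.mul_assoc, Matrix.mul_assoc, hSJ,
        ← Matrix.mul_assoc (Matrix.diagonal (star g)) M S⁻¹, ← Matrix.mul_assoc]
    have e2 : symplJ N * (S * Matrix.diagonal g * S⁻¹)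
        = S⁻¹ᴴ * (M * Matrix.diagonal g) * S⁻¹ := by
      rw [← Matrix.mul_assoc, ← Matrix.mul_assoc, hJS,
        Matrix.mul_assoc S⁻¹ᴴ M (Matrix.diagonal g)]
    rw [e1, e2, ← Matrix.add_mul, ← Matrix.mul_add, hzero]
    simp
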